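/- Let σ be a 3 2 1-avoiding permutation of {1,...,ℓ} and let s be such that σ(s) ≥ s (i.e., s is a fixed point or an excedance of σ). Then s lies in the first row of the recording tableau of σ under the Robinson-Schensted correspondence. -/

import Mathlib

/-- A permutation `σ` of `{1,…,ℓ}` (modeled as `Fin ℓ`) is `3 2 1`-avoiding if there do not
exist `a < b < c` with `σ c < σ b < σ a`. -/
def Avoids321 {ℓ : ℕ} (σ : Equiv.Perm (Fin ℓ)) : Prop :=
  ¬ ∃ a b c : Fin ℓ, a < b ∧ b < c ∧ σ c < σ b ∧ σ b < σ a

/-- Robinson–Schensted row insertion of `x` into a single row: `x` is appended at the end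
if it is larger than all entries; otherwise it replaces (bumps) the smallest entry `y > x`.
Returns the new row together with the bumped entry, if any. -/
def rowInsert (x : ℕ) : List ℕ → List ℕ × Option ℕ
  | [] => ([x], none)
  | y :: ys =>
    if x < y then (x :: ys, some y)
    else
      let p := rowInsert x ys
      (y :: p.1, p.2)

/-- Robinson–Schensted insertion of `x` into a tableau (a list of rows): insert into the
first row; a bumped entry is inserted into the subsequent rows. Returns the new tableau
together with the (0-indexed) row in which the new box was created. -/
def insertTableau (x : ℕ) : List (List ℕ) → List (List ℕ) × ℕ
  | [] => ([[x]], 0)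
  | r :: rest =>
    match rowInsert x r with
    | (r', none) => (r' :: rest, 0)
    | (r', some y) =>
      let p := insertTableau y rest
      (r' :: p.1, p.2 + 1)

/-- Robinson–Schensted insertion of a word: returns the insertion tableau `P` together with
the list whose `s`-th entry (0-indexed) is the row of `P` in which the box created at step
`s` appears — equivalently, the row of the recording tableau `Q` containing entry `s+1`. -/
def RSsteps (w : List ℕ) : List (List ℕ) × List ℕ :=
  w.foldl (fun p x => let q := insertTableau x p.1; (q.1, p.2 ++ [q.2])) ([], [])

/-- The word of a permutation `σ` of `Fin ℓ`: `σ(1), σ(2), …, σ(ℓ)`. -/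
def permWord {ℓ : ℕ} (σ : Equiv.Perm (Fin ℓ)) : List ℕ :=
  List.ofFn fun i => (σ i : ℕ)

/-! ### Auxiliary lemmas -/

/-- Tableau obtained by inserting a list of values into a tableau. -/
def tabAfter (T : List (List ℕ)) (l : List ℕ) : List (List ℕ) :=
  l.foldl (fun t x => (insertTableau x t).1) T

/-- The list of rows of the new boxes, step by step. -/
def RSrows : List (List ℕ) → List ℕ → List ℕ
  | _, [] => []
  | T, x :: xs => (insertTableau x T).2 :: RSrows (insertTableau x T).1 xs

lemma RS_foldl (w : List ℕ) (T : List (List ℕ)) (acc : List ℕ) :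
    (w.foldl (fun p x => let q := insertTableau x p.1; (q.1, p.2 ++ [q.2])) (T, acc))
      = (tabAfter T w, acc ++ RSrows T w) := by
  induction w generalizing T acc with
  | nil => simp [tabAfter, RSrows]
  | cons x xs ih => simp [tabAfter, RSrows, List.foldl_cons, ih]

lemma RSsteps_snd (w : List ℕ) : (RSsteps w).2 = RSrows [] w := by
  rw [RSsteps, RS_foldl]; rfl

lemma getD_RSrows (w : List ℕ) (T : List (List ℕ)) (s : ℕ) (h : s < w.length) :
    (RSrows T w).getD s 5 = (insertTableau (w.getD s 0) (tabAfter T (w.take s))).2 := by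
  induction w generalizing T s with
  | nil => simp at h
  | cons x xs ih =>
    cases s with
    | zero => simp [RSrows, tabAfter]
    | succ n =>
      simp only [RSrows, List.getD_cons_succ, List.take_succ_cons]
      rw [ih _ n (by simpa using h)]
      rfl

lemma rowInsert_some (x : ℕ) (r : List ℕ) (y : ℕ)
    (h : (rowInsert x r).2 = some y) : y ∈ r ∧ x < y := by
  induction r with
  | nil => simp [rowInsert] at h
  | cons z zs ih =>
    rw [rowInsert] at h
    split_ifs at h with hxz
    · simp only at h
      obtain rfl : z = y := by simpa using h
      exact ⟨List.mem_cons_self, hxz⟩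
    · simp only at h
      obtain ⟨h1, h2⟩ := ih h
      exact ⟨List.mem_cons_of_mem _ h1, h2⟩

lemma insertTableau_pos (x : ℕ) (T : List (List ℕ))
    (h : (insertTableau x T).2 ≠ 0) : ∃ r ∈ T, ∃ y ∈ r, x < y := by
  cases T with
  | nil => simp [insertTableau] at h
  | cons r rest =>
    rcases ho : (rowInsert x r).2 with _ | y
    · exfalso; apply h
      rw [insertTableau]
      rcases hri : rowInsert x r with ⟨r', o⟩
      rw [hri] at ho; subst ho; rfl
    · obtain ⟨h1, h2⟩ := rowInsert_some x r y ho
      exact ⟨r, List.mem_cons_self, y, h1, h2⟩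

lemma rowInsert_fst_mem (x : ℕ) (r : List ℕ) :
    ∀ y ∈ (rowInsert x r).1, y = x ∨ y ∈ r := by
  induction r with
  | nil => simp [rowInsert]
  | cons z zs ih =>
    intro y hy
    rw [rowInsert] at hy
    split_ifs at hy with hxz
    · rcases List.mem_cons.mp hy with h | h
      · exact Or.inl h
      · exact Or.inr (List.mem_cons_of_mem _ h)
    · rcases List.mem_cons.mp hy with h | h
      · exact Or.inr (h ▸ List.mem_cons_self)
      · rcases ih y h with h' | h'
        · exact Or.inl h'
        · exact Or.inr (List.mem_cons_of_mem _ h')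

lemma insertTableau_mem (P : ℕ → Prop) (x : ℕ) (T : List (List ℕ))
    (hT : ∀ r ∈ T, ∀ y ∈ r, P y) (hx : P x) :
    ∀ r ∈ (insertTableau x T).1, ∀ y ∈ r, P y := by
  induction T generalizing x with
  | nil =>
    intro r hr y hy
    simp only [insertTableau, List.mem_singleton] at hr
    subst hr
    obtain rfl : y = x := by simpa using hy
    exact hx
  | cons r rest ih =>
    intro r' hr' y hy
    rw [insertTableau] at hr'
    rcases hri : rowInsert x r with ⟨rr, o⟩
    rw [hri] at hr'
    cases o with
    | none =>
      simp only at hr'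
      rcases List.mem_cons.mp hr' with h | h
      · subst h
        rcases rowInsert_fst_mem x r y (hri ▸ hy) with h' | h'
        · exact h' ▸ hx
        · exact hT r (List.mem_cons_self) y h'
      · exact hT r' (List.mem_cons_of_mem _ h) y hy
    | some z =>
      simp only at hr'
      have hz : P z := hT r (List.mem_cons_self) z (rowInsert_some x r z (by rw [hri])).1
      rcases List.mem_cons.mp hr' with h | h
      · subst h
        rcases rowInsert_fst_mem x r y (hri ▸ hy) with h' | h'
        · exact h' ▸ hx
        · exact hT r (List.mem_cons_self) y h'
      · exact ih z (fun r hr => hT r (List.mem_cons_of_mem _ hr)) hz r' h y hy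

lemma tabAfter_mem (P : ℕ → Prop) (w : List ℕ) (T : List (List ℕ))
    (hT : ∀ r ∈ T, ∀ y ∈ r, P y) (hw : ∀ x ∈ w, P x) :
    ∀ r ∈ tabAfter T w, ∀ y ∈ r, P y := by
  induction w generalizing T with
  | nil => exact hT
  | cons x xs ih =>
    exact ih _ (insertTableau_mem P x T hT (hw x (List.mem_cons_self)))
      (fun z hz => hw z (List.mem_cons_of_mem _ hz))

/-- The counting argument: if `σ` is 321-avoiding, `s ≤ σ s`, then there is no `t < s`
with `σ s < σ t`. -/
lemma no_earlier_bigger {ℓ : ℕ} (σ : Equiv.Perm (Fin ℓ)) (hσ : Avoids321 σ)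
    (s : Fin ℓ) (hs : s ≤ σ s) (t : Fin ℓ) (hts : t < s) (hst : σ s < σ t) : False := by
  -- find u > s with σ u < σ s
  have hcard : (Finset.univ.filter (fun i : Fin ℓ => σ i < σ s)).card = (σ s : ℕ) := by
    have : (Finset.univ.filter (fun i : Fin ℓ => σ i < σ s))
        = (Finset.Iio (σ s)).image σ.symm := by
      ext i
      simp only [Finset.mem_filter, Finset.mem_univ, true_and, Finset.mem_image,
        Finset.mem_Iio]
      constructor
      · intro h; exact ⟨σ i, h, σ.symm_apply_apply i⟩
      · rintro ⟨v, hv, rfl⟩; simpa using hv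
    rw [this, Finset.card_image_of_injective _ σ.symm.injective, Fin.card_Iio]
  by_cases hu : ∃ u : Fin ℓ, s < u ∧ σ u < σ s
  · obtain ⟨u, hsu, huv⟩ := hu
    exact hσ ⟨t, s, u, hts, hsu, huv, hst⟩
  · push_neg at hu
    have hsub : (Finset.univ.filter (fun i : Fin ℓ => σ i < σ s))
        ⊆ (Finset.Iio s).erase t := by
      intro i hi
      simp only [Finset.mem_filter, Finset.mem_univ, true_and] at hi
      rw [Finset.mem_erase, Finset.mem_Iio]
      constructor
      · rintro rfl; exact absurd hi (lt_asymm hst)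
      · rcases lt_trichotomy i s with h | h | h
        · exact h
        · subst h; exact absurd hi (lt_irrefl _)
        · exact absurd hi (not_lt.mpr (hu i h))
    have hle := Finset.card_le_card hsub
    rw [hcard, Finset.card_erase_of_mem (by simpa [Finset.mem_Iio] using hts),
      Fin.card_Iio] at hle
    have h1 : (1 : ℕ) ≤ (s : ℕ) := Nat.one_le_iff_ne_zero.mpr (by
      intro h
      exact absurd (Fin.lt_def.mp hts) (by omega))
    have h2 : (s : ℕ) ≤ (σ s : ℕ) := hs
    omega

/-- If `σ` is `3 2 1`-avoiding and `σ(s) ≥ s` (a fixed point or excedance), then `s` lies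
in the first row of the recording tableau of `σ` under the Robinson–Schensted
correspondence. -/
theorem stmt_9 {ℓ : ℕ} (σ : Equiv.Perm (Fin ℓ)) (hσ : Avoids321 σ)
    (s : Fin ℓ) (hs : s ≤ σ s) :
    (RSsteps (permWord σ)).2.getD (s : ℕ) 5 = 0 := by
  set w := permWord σ with hw
  have hlen : w.length = ℓ := by simp [hw, permWord]
  have hsl : (s : ℕ) < w.length := by rw [hlen]; exact s.isLt
  rw [RSsteps_snd, getD_RSrows _ _ _ hsl]
  have hget : w.getD (s : ℕ) 0 = (σ s : ℕ) := by
    rw [List.getD_eq_getElem _ _ hsl]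
    simp [hw, permWord]
  rw [hget]
  by_contra hne
  obtain ⟨r, hr, y, hy, hxy⟩ := insertTableau_pos _ _ hne
  -- every entry of the tableau is an earlier value of σ
  have hmem : y ∈ w.take (s : ℕ) := by
    refine tabAfter_mem (fun z => z ∈ w.take (s : ℕ)) _ [] (by simp) (fun z hz => hz)
      r hr y hy
  obtain ⟨i, hi, hiy⟩ := List.mem_iff_getElem.mp hmem
  have hitake : i < (s : ℕ) := by
    have := hi
    rw [List.length_take] at this
    omega
  have hiw : i < ℓ := by omega
  have hyval : y = (σ ⟨i, hiw⟩ : ℕ) := by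
    rw [← hiy, List.getElem_take]
    simp [hw, permWord]
  exact no_earlier_bigger σ hσ s hs ⟨i, hiw⟩ (by simpa [Fin.lt_def] using hitake)
    (by rw [Fin.lt_def]; omega)
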